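/- arXiv:0704.0509 — 3 statements merged into one kernel-verified Lean document; each statement's English description precedes it below -/
import Mathlib

section
/- Let $a, b \geq 0$, $0 \leq \alpha < 1$, $0 < T < \infty$, and let $u : [0,T] \to [0,\infty)$ be an integrable function satisfying $u(t) \leq a(T-t)^{-\alpha} + b \int_t^T u(s)\,ds$ for almost every $t \in [0,T)$. Then there exists a constant $M$ depending only on $b$, $\alpha$, and $T$ (one may take $M = 1 + bTe^{bT}/(1-\alpha)$) such that $u(t) \leq a M (T-t)^{-\alpha}$ for almost every $t \in [0,T)$. -/
open MeasureTheory Set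

/-- Backward Gronwall inequality with singular weight (β = 1 case). -/
theorem backward_gronwall_singular
    (b α T : ℝ) (hb : 0 ≤ b) (hα0 : 0 ≤ α) (hα1 : α < 1) (hT : 0 < T) :
    ∃ M : ℝ, M = 1 + b * T * Real.exp (b * T) / (1 - α) ∧
      ∀ (a : ℝ) (u : ℝ → ℝ), 0 ≤ a →
        IntegrableOn u (Set.Icc 0 T) →
        (∀ t ∈ Set.Icc 0 T, 0 ≤ u t) →
        (∀ᵐ t ∂(volume.restrict (Set.Ico 0 T)),
          u t ≤ a * (T - t) ^ (-α) + b * ∫ s in t..T, u s) →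
        (∀ᵐ t ∂(volume.restrict (Set.Ico 0 T)),
          u t ≤ a * M * (T - t) ^ (-α)) := by
  refine ⟨1 + b * T * Real.exp (b * T) / (1 - α), rfl, ?_⟩
  intro a u ha huint hupos h
  have h1α : (0:ℝ) < 1 - α := by linarith
  -- extend u by zero
  set v : ℝ → ℝ := (Set.Icc 0 T).indicator u with hv_def
  have hv_int : Integrable v := huint.integrable_indicator measurableSet_Icc
  have hv0 : ∀ s, 0 ≤ v s := fun s => Set.indicator_nonneg (fun y hy => hupos y hy) s
  have hvii : ∀ p q : ℝ, IntervalIntegrable v volume p q :=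
    fun p q => hv_int.intervalIntegrable
  set W : ℝ → ℝ := fun t => ∫ s in t..T, v s with hW_def
  have hWeq : ∀ t, W t = (∫ s in (0:ℝ)..T, v s) - ∫ s in (0:ℝ)..t, v s := by
    intro t
    rw [eq_sub_iff_add_eq, add_comm]
    exact intervalIntegral.integral_add_adjacent_intervals (hvii 0 t) (hvii t T)
  have hWcont : Continuous W := by
    have hc := hv_int.continuous_primitive 0
    have : W = fun t => (∫ s in (0:ℝ)..T, v s) - ∫ s in (0:ℝ)..t, v s := funext hWeq
    rw [this]; exact continuous_const.sub hc
  have hW0 : ∀ t, t ≤ T → 0 ≤ W t := by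
    intro t ht
    exact intervalIntegral.integral_nonneg ht (fun s _ => hv0 s)
  have hWu : ∀ t ∈ Icc (0:ℝ) T, (∫ s in t..T, u s) = W t := by
    intro t ht
    apply intervalIntegral.integral_congr
    intro s hs
    rw [uIcc_of_le ht.2] at hs
    have hmem : s ∈ Icc (0:ℝ) T := ⟨le_trans ht.1 hs.1, hs.2⟩
    exact (Set.indicator_of_mem hmem u).symm
  set C0 : ℝ := a * T ^ (1 - α) / (1 - α) with hC0_def
  have hC0 : 0 ≤ C0 := by
    apply div_nonneg _ h1α.le
    exact mul_nonneg ha (Real.rpow_nonneg hT.le _)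
  -- the a.e. hypothesis, restated for v and W
  have hne : ∀ᵐ s : ℝ ∂volume, s ≠ T := by
    rw [ae_iff]
    have : {s : ℝ | ¬ s ≠ T} = {T} := by ext s; simp
    rw [this]
    exact Real.volume_singleton
  have h' : ∀ᵐ s ∂(volume : Measure ℝ), s ∈ Ico (0:ℝ) T →
      v s ≤ a * (T - s) ^ (-α) + b * W s := by
    filter_upwards [(ae_restrict_iff' measurableSet_Ico).mp h] with s hs hsmem
    have hsI : s ∈ Icc (0:ℝ) T := ⟨hsmem.1, hsmem.2.le⟩
    have : v s = u s := Set.indicator_of_mem hsI u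
    rw [this, ← hWu s hsI]
    exact hs hsmem
  -- the singular part integrates to something bounded by C0
  have hrpow_int : ∀ t, IntervalIntegrable (fun s => (T - s) ^ (-α)) volume t T := by
    intro t
    have := (intervalIntegral.intervalIntegrable_rpow' (show (-1:ℝ) < -α by linarith)
      (a := T - T) (b := T - t)).comp_sub_left T
    simpa using this.symm
  have hrpow_val : ∀ t, (∫ s in t..T, (T - s) ^ (-α)) = (T - t) ^ (1 - α) / (1 - α) := by
    intro t
    rw [intervalIntegral.integral_comp_sub_left (fun x => x ^ (-α : ℝ)) T]
    rw [sub_self, integral_rpow (Or.inl (by linarith))]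
    rw [Real.zero_rpow (by linarith : (0:ℝ) < -α + 1).ne']
    rw [show (-α + 1 : ℝ) = 1 - α by ring, sub_zero]
  -- key integral inequality for W
  have key : ∀ t ∈ Icc (0:ℝ) T, W t ≤ C0 + b * ∫ s in t..T, W s := by
    intro t ht
    have hWint : IntervalIntegrable W volume t T := hWcont.intervalIntegrable t T
    have hgint : IntervalIntegrable (fun s => a * (T - s) ^ (-α) + b * W s) volume t T :=
      ((hrpow_int t).const_mul a).add (hWint.const_mul b)
    have h1 : W t ≤ ∫ s in t..T, (a * (T - s) ^ (-α) + b * W s) := by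
      apply intervalIntegral.integral_mono_ae_restrict ht.2 (hvii t T) hgint
      filter_upwards [ae_restrict_mem measurableSet_Icc, ae_restrict_of_ae h',
        ae_restrict_of_ae hne] with s hs1 hs2 hs3
      exact hs2 ⟨le_trans ht.1 hs1.1, lt_of_le_of_ne hs1.2 hs3⟩
    have h2 : (∫ s in t..T, (a * (T - s) ^ (-α) + b * W s))
        = a * ((T - t) ^ (1 - α) / (1 - α)) + b * ∫ s in t..T, W s := by
      rw [intervalIntegral.integral_add ((hrpow_int t).const_mul a) (hWint.const_mul b),
        intervalIntegral.integral_const_mul, intervalIntegral.integral_const_mul,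
        hrpow_val t]
    have h3 : a * ((T - t) ^ (1 - α) / (1 - α)) ≤ C0 := by
      have hle' : (T - t) ^ (1 - α : ℝ) ≤ T ^ (1 - α : ℝ) :=
        Real.rpow_le_rpow (by linarith [ht.2]) (by linarith [ht.1]) h1α.le
      rw [hC0_def, mul_div_assoc]
      gcongr
    calc W t ≤ _ := h1
      _ = _ := h2
      _ ≤ C0 + b * ∫ s in t..T, W s := by linarith
  -- Gronwall setup
  set P : ℝ → ℝ := fun x => ∫ s in (0:ℝ)..x, W s with hP_def
  have hP : ∀ x, HasDerivAt P (W x) x := by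
    intro x
    exact intervalIntegral.integral_hasDerivAt_right (hWcont.intervalIntegrable 0 x)
      hWcont.stronglyMeasurable.stronglyMeasurableAtFilter hWcont.continuousAt
  set Y : ℝ → ℝ := fun r => ∫ s in (T - r)..T, W s with hY_def
  have hYeq : ∀ r, Y r = P T - P (T - r) := by
    intro r
    rw [eq_sub_iff_add_eq, add_comm]
    exact intervalIntegral.integral_add_adjacent_intervals
      (hWcont.intervalIntegrable _ _) (hWcont.intervalIntegrable _ _)
  have hYder : ∀ r, HasDerivAt Y (W (T - r)) r := by
    intro r
    have hcomp : HasDerivAt (fun r : ℝ => P (T - r)) (-W (T - r)) r := by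
      have := (hP (T - r)).comp r ((hasDerivAt_id r).const_sub T)
      exact this.congr_deriv (by ring)
    have h4 := (hasDerivAt_const r (P T)).sub hcomp
    have : Y = fun r => P T - P (T - r) := funext hYeq
    rw [this]
    exact h4.congr_deriv (by ring)
  have hYnonneg : ∀ r, 0 ≤ r → 0 ≤ Y r := by
    intro r hr
    exact intervalIntegral.integral_nonneg (by linarith) (fun s hs => hW0 s hs.2)
  have grw := norm_le_gronwallBound_of_norm_deriv_right_le (f := Y)
    (f' := fun r => W (T - r)) (δ := 0) (K := b) (ε := C0) (a := 0) (b := T)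
    (fun r _ => (hYder r).continuousAt.continuousWithinAt)
    (fun x _ => (hYder x).hasDerivWithinAt)
    (by simp [hY_def])
    (by
      intro x hx
      have hW1 : 0 ≤ W (T - x) := hW0 _ (by linarith [hx.1])
      have hY1 : 0 ≤ Y x := hYnonneg x hx.1
      rw [Real.norm_eq_abs, Real.norm_eq_abs, abs_of_nonneg hW1, abs_of_nonneg hY1]
      have := key (T - x) ⟨by linarith [hx.2], by linarith [hx.1]⟩
      have hYv : (∫ s in (T - x)..T, W s) = Y x := rfl
      rw [hYv] at this
      linarith)
  -- bound on b * W t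
  have hWbound : ∀ t ∈ Icc (0:ℝ) T, b * W t ≤ b * C0 * Real.exp (b * T) := by
    intro t ht
    rcases eq_or_lt_of_le hb with hb0 | hbpos
    · rw [← hb0]; simp
    · have hx : T - t ∈ Icc (0:ℝ) T := ⟨by linarith [ht.2], by linarith [ht.1]⟩
      have hY := grw (T - t) hx
      have hYv : Y (T - t) = ∫ s in t..T, W s := by
        simp [hY_def, sub_sub_cancel]
      rw [gronwallBound_of_K_ne_0 hbpos.ne'] at hY
      rw [Real.norm_eq_abs, abs_of_nonneg (hYnonneg _ hx.1)] at hY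
      simp only [sub_zero, zero_mul, zero_add] at hY
      have hkey := key t ht
      rw [hYv] at hY
      have hee : Real.exp (b * (T - t)) ≤ Real.exp (b * T) := by
        apply Real.exp_le_exp.mpr
        nlinarith [ht.1]
      have hbC : b * (C0 / b) = C0 := by field_simp
      have : W t ≤ C0 * Real.exp (b * (T - t)) := by
        have h5 : b * (∫ s in t..T, W s) ≤ C0 * (Real.exp (b * (T - t)) - 1) := by
          calc b * (∫ s in t..T, W s) ≤ b * (C0 / b * (Real.exp (b * (T - t)) - 1)) :=
                mul_le_mul_of_nonneg_left hY hb
            _ = C0 * (Real.exp (b * (T - t)) - 1) := by field_simp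
        have hring : C0 + C0 * (Real.exp (b * (T - t)) - 1) = C0 * Real.exp (b * (T - t)) := by
          ring
        linarith
      have h6 : C0 * Real.exp (b * (T - t)) ≤ C0 * Real.exp (b * T) :=
        mul_le_mul_of_nonneg_left hee hC0
      calc b * W t ≤ b * (C0 * Real.exp (b * T)) :=
            mul_le_mul_of_nonneg_left (this.trans h6) hb
        _ = b * C0 * Real.exp (b * T) := by ring
  -- conclusion
  filter_upwards [h, ae_restrict_mem measurableSet_Ico] with t hle htmem
  have htI : t ∈ Icc (0:ℝ) T := ⟨htmem.1, htmem.2.le⟩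
  have hTt : 0 < T - t := by linarith [htmem.2]
  have hWb := hWbound t htI
  rw [hWu t htI] at hle
  have hTpow : T ^ (-α : ℝ) ≤ (T - t) ^ (-α : ℝ) :=
    Real.rpow_le_rpow_of_nonpos hTt (by linarith [htmem.1]) (by linarith)
  have hsplit : T ^ (1 - α : ℝ) = T * T ^ (-α : ℝ) := by
    rw [show (1 - α : ℝ) = 1 + (-α) by ring, Real.rpow_add hT, Real.rpow_one]
  have hfinal : b * C0 * Real.exp (b * T)
      = a * (b * T * Real.exp (b * T) / (1 - α)) * T ^ (-α : ℝ) := by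
    rw [hC0_def, hsplit]; ring
  have hnn : 0 ≤ a * (b * T * Real.exp (b * T) / (1 - α)) := by
    apply mul_nonneg ha
    apply div_nonneg _ h1α.le
    positivity
  have h7 : a * (b * T * Real.exp (b * T) / (1 - α)) * T ^ (-α : ℝ)
      ≤ a * (b * T * Real.exp (b * T) / (1 - α)) * (T - t) ^ (-α : ℝ) :=
    mul_le_mul_of_nonneg_left hTpow hnn
  have : u t ≤ a * (T - t) ^ (-α)
      + a * (b * T * Real.exp (b * T) / (1 - α)) * (T - t) ^ (-α : ℝ) := by
    calc u t ≤ a * (T - t) ^ (-α) + b * W t := hle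
      _ ≤ a * (T - t) ^ (-α) + b * C0 * Real.exp (b * T) := by linarith
      _ = a * (T - t) ^ (-α) + a * (b * T * Real.exp (b * T) / (1 - α)) * T ^ (-α : ℝ) := by
          rw [hfinal]
      _ ≤ _ := by linarith
  calc u t ≤ _ := this
    _ = a * (1 + b * T * Real.exp (b * T) / (1 - α)) * (T - t) ^ (-α) := by ring
end

section
/- Let $a, b \geq 0$, $0 \leq \alpha < 1$, $\beta > 0$, $0 < T < \infty$, and let $u : [0,T] \to [0,\infty)$ be an integrable function satisfying $u(t) \leq a(T-t)^{-\alpha} + b \int_t^T (s-t)^{\beta-1} u(s)\,ds$ for almost every $t \in [0,T)$. Then there exists a constant $M$ depending only on $b$, $\alpha$, $\beta$, and $T$ such that $u(t) \leq a M (T-t)^{-\alpha}$ for almost every $t \in [0,T)$. -/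
open MeasureTheory Set
open scoped ENNReal NNReal

open intervalIntegral in
lemma lint_rpow_left {p t m : ℝ} (hp : 0 < p) (htm : t ≤ m) :
    ∫⁻ s in Ioo t m, ENNReal.ofReal ((s - t) ^ (p - 1)) = ENNReal.ofReal ((m - t) ^ p / p) := by
  have hii : IntervalIntegrable (fun s => (s - t) ^ (p - 1)) volume t m := by
    have := (intervalIntegrable_rpow' (a := 0) (b := m - t) (r := p - 1) (by linarith)).comp_sub_right t
    simpa using this
  have hint : IntegrableOn (fun s => (s - t) ^ (p - 1)) (Ioo t m) := by
    exact ((intervalIntegrable_iff_integrableOn_Ioc_of_le htm).mp hii).mono_set Ioo_subset_Ioc_self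
  rw [← ofReal_integral_eq_lintegral_ofReal hint]
  · congr 1
    have h1 : ∫ s in Ioo t m, (s - t) ^ (p - 1) = ∫ s in t..m, (s - t) ^ (p - 1) := by
      rw [integral_of_le htm, ← integral_Ioc_eq_integral_Ioo]
    rw [h1, integral_comp_sub_right (fun x => x ^ (p - 1)) t]
    simp only [sub_self]
    rw [integral_rpow (Or.inl (by linarith))]
    rw [Real.zero_rpow (by linarith), sub_add_cancel, sub_zero]
  · filter_upwards [self_mem_ae_restrict measurableSet_Ioo] with s hs
    exact Real.rpow_nonneg (by linarith [hs.1]) _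

open intervalIntegral in
lemma lint_rpow_right {q m r : ℝ} (hq : 0 < q) (hmr : m ≤ r) :
    ∫⁻ s in Ico m r, ENNReal.ofReal ((r - s) ^ (q - 1)) = ENNReal.ofReal ((r - m) ^ q / q) := by
  rw [← restrict_Ioo_eq_restrict_Ico]
  have hii : IntervalIntegrable (fun s => (r - s) ^ (q - 1)) volume m r := by
    have := (intervalIntegrable_rpow' (a := r - r) (b := r - m) (r := q - 1) (by linarith)).comp_sub_left r
    simpa using this.symm
  have hint : IntegrableOn (fun s => (r - s) ^ (q - 1)) (Ioo m r) := by
    exact ((intervalIntegrable_iff_integrableOn_Ioc_of_le hmr).mp hii).mono_set Ioo_subset_Ioc_self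
  rw [← ofReal_integral_eq_lintegral_ofReal hint]
  · congr 1
    have h1 : ∫ s in Ioo m r, (r - s) ^ (q - 1) = ∫ s in m..r, (r - s) ^ (q - 1) := by
      rw [integral_of_le hmr, ← integral_Ioc_eq_integral_Ioo]
    rw [h1, integral_comp_sub_left (fun x => x ^ (q - 1)) r]
    simp only [sub_self]
    rw [integral_rpow (Or.inl (by linarith))]
    rw [Real.zero_rpow (by linarith), sub_add_cancel, sub_zero]
  · filter_upwards [self_mem_ae_restrict measurableSet_Ioo] with s hs
    exact Real.rpow_nonneg (by linarith [hs.2]) _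

lemma half_bound_right {q t r : ℝ} (hq : 0 < q) (htr : t < r) {s : ℝ} (hs : s ≤ (t + r) / 2)
    (hst : t < s) : (r - s) ^ (q - 1) ≤ max 1 (2 ^ (1 - q)) * (r - t) ^ (q - 1) := by
  have h2 : (r - t) / 2 ≤ r - s := by linarith
  have h3 : 0 < (r - t) / 2 := by linarith
  rcases le_or_gt 1 q with h | h
  · calc (r - s) ^ (q - 1) ≤ (r - t) ^ (q - 1) :=
          Real.rpow_le_rpow (by linarith) (by linarith) (by linarith)
      _ ≤ max 1 (2 ^ (1 - q)) * (r - t) ^ (q - 1) := by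
          nth_rewrite 1 [← one_mul ((r - t) ^ (q - 1))]
          exact mul_le_mul_of_nonneg_right (le_max_left _ _) (Real.rpow_nonneg (by linarith) _)
  · calc (r - s) ^ (q - 1) ≤ ((r - t) / 2) ^ (q - 1) :=
          Real.rpow_le_rpow_of_nonpos h3 h2 (by linarith)
      _ = 2 ^ (1 - q) * (r - t) ^ (q - 1) := by
          rw [Real.div_rpow (by linarith) (by norm_num), div_eq_mul_inv, mul_comm,
            ← Real.rpow_neg (by norm_num), neg_sub]
      _ ≤ max 1 (2 ^ (1 - q)) * (r - t) ^ (q - 1) :=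
          mul_le_mul_of_nonneg_right (le_max_right _ _) (Real.rpow_nonneg (by linarith) _)

lemma half_bound_left {p t r : ℝ} (hp : 0 < p) (htr : t < r) {s : ℝ} (hs : (t + r) / 2 ≤ s)
    (hsr : s < r) : (s - t) ^ (p - 1) ≤ max 1 (2 ^ (1 - p)) * (r - t) ^ (p - 1) := by
  have h2 : (r - t) / 2 ≤ s - t := by linarith
  have h3 : 0 < (r - t) / 2 := by linarith
  rcases le_or_gt 1 p with h | h
  · calc (s - t) ^ (p - 1) ≤ (r - t) ^ (p - 1) :=
          Real.rpow_le_rpow (by linarith) (by linarith) (by linarith)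
      _ ≤ max 1 (2 ^ (1 - p)) * (r - t) ^ (p - 1) := by
          nth_rewrite 1 [← one_mul ((r - t) ^ (p - 1))]
          exact mul_le_mul_of_nonneg_right (le_max_left _ _) (Real.rpow_nonneg (by linarith) _)
  · calc (s - t) ^ (p - 1) ≤ ((r - t) / 2) ^ (p - 1) :=
          Real.rpow_le_rpow_of_nonpos h3 h2 (by linarith)
      _ = 2 ^ (1 - p) * (r - t) ^ (p - 1) := by
          rw [Real.div_rpow (by linarith) (by norm_num), div_eq_mul_inv, mul_comm,
            ← Real.rpow_neg (by norm_num), neg_sub]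
      _ ≤ max 1 (2 ^ (1 - p)) * (r - t) ^ (p - 1) :=
          mul_le_mul_of_nonneg_right (le_max_right _ _) (Real.rpow_nonneg (by linarith) _)

/-- The constant in the kernel composition bound. -/
noncomputable def Ck (p q : ℝ) : ℝ := max 1 (2 ^ (1 - q)) / p + max 1 (2 ^ (1 - p)) / q

lemma Ck_pos {p q : ℝ} (hp : 0 < p) (hq : 0 < q) : 0 < Ck p q := by
  have h1 : (0:ℝ) < max 1 (2 ^ (1 - q)) := lt_max_of_lt_left one_pos
  have h2 : (0:ℝ) < max 1 (2 ^ (1 - p)) := lt_max_of_lt_left one_pos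
  exact add_pos (div_pos h1 hp) (div_pos h2 hq)

lemma kernel_bound {p q t r : ℝ} (hp : 0 < p) (hq : 0 < q) (htr : t < r) :
    ∫⁻ s in Ioo t r, ENNReal.ofReal ((s - t) ^ (p - 1) * (r - s) ^ (q - 1)) ≤
      ENNReal.ofReal (Ck p q * (r - t) ^ (p + q - 1)) := by
  set m := (t + r) / 2 with hm
  have htm : t < m := by rw [hm]; linarith
  have hmr : m < r := by rw [hm]; linarith
  have hrt : (0:ℝ) < r - t := by linarith
  have hsub : Ioo t r ⊆ Ioo t m ∪ Ico m r := by
    intro s hs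
    rcases le_or_gt s m with h | h
    · rcases lt_or_eq_of_le h with h' | h'
      · exact Or.inl ⟨hs.1, h'⟩
      · exact Or.inr ⟨h'.ge, hs.2⟩
    · exact Or.inr ⟨h.le, hs.2⟩
  have key1 : ∫⁻ s in Ioo t m, ENNReal.ofReal ((s - t) ^ (p - 1) * (r - s) ^ (q - 1)) ≤
      ENNReal.ofReal (max 1 (2 ^ (1 - q)) / p * (r - t) ^ (p + q - 1)) := by
    have step : ∫⁻ s in Ioo t m, ENNReal.ofReal ((s - t) ^ (p - 1) * (r - s) ^ (q - 1)) ≤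
        ∫⁻ s in Ioo t m, ENNReal.ofReal (max 1 (2 ^ (1 - q)) * (r - t) ^ (q - 1)) *
          ENNReal.ofReal ((s - t) ^ (p - 1)) := by
      refine lintegral_mono_ae ?_
      filter_upwards [self_mem_ae_restrict measurableSet_Ioo] with s hs
      rw [← ENNReal.ofReal_mul (by positivity)]
      apply ENNReal.ofReal_le_ofReal
      rw [mul_comm ((s - t) ^ (p - 1)) _]
      exact mul_le_mul_of_nonneg_right
        (half_bound_right hq htr hs.2.le hs.1)
        (Real.rpow_nonneg (by linarith [hs.1]) _)
    rw [lintegral_const_mul _ (by fun_prop : Measurable fun s : ℝ => ENNReal.ofReal ((s - t) ^ (p - 1)))] at step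
    rw [lint_rpow_left hp htm.le] at step
    refine step.trans ?_
    rw [← ENNReal.ofReal_mul (by positivity)]
    apply ENNReal.ofReal_le_ofReal
    have hmt : (m - t) ^ p ≤ (r - t) ^ p :=
      Real.rpow_le_rpow (by linarith) (by linarith) hp.le
    calc max 1 (2 ^ (1 - q)) * (r - t) ^ (q - 1) * ((m - t) ^ p / p)
        ≤ max 1 (2 ^ (1 - q)) * (r - t) ^ (q - 1) * ((r - t) ^ p / p) := by
          apply mul_le_mul_of_nonneg_left (by apply div_le_div_of_nonneg_right hmt hp.le; ) (by positivity)
      _ = max 1 (2 ^ (1 - q)) / p * (r - t) ^ (p + q - 1) := by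
          rw [show p + q - 1 = (q - 1) + p by ring, Real.rpow_add hrt]; ring
  have key2 : ∫⁻ s in Ico m r, ENNReal.ofReal ((s - t) ^ (p - 1) * (r - s) ^ (q - 1)) ≤
      ENNReal.ofReal (max 1 (2 ^ (1 - p)) / q * (r - t) ^ (p + q - 1)) := by
    have step : ∫⁻ s in Ico m r, ENNReal.ofReal ((s - t) ^ (p - 1) * (r - s) ^ (q - 1)) ≤
        ∫⁻ s in Ico m r, ENNReal.ofReal (max 1 (2 ^ (1 - p)) * (r - t) ^ (p - 1)) *
          ENNReal.ofReal ((r - s) ^ (q - 1)) := by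
      refine lintegral_mono_ae ?_
      filter_upwards [self_mem_ae_restrict measurableSet_Ico] with s hs
      rw [← ENNReal.ofReal_mul (by positivity)]
      apply ENNReal.ofReal_le_ofReal
      exact mul_le_mul_of_nonneg_right
        (half_bound_left hp htr hs.1 hs.2)
        (Real.rpow_nonneg (by linarith [hs.2]) _)
    rw [lintegral_const_mul _ (by fun_prop : Measurable fun s : ℝ => ENNReal.ofReal ((r - s) ^ (q - 1)))] at step
    rw [lint_rpow_right hq hmr.le] at step
    refine step.trans ?_
    rw [← ENNReal.ofReal_mul (by positivity)]
    apply ENNReal.ofReal_le_ofReal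
    have hmt : (r - m) ^ q ≤ (r - t) ^ q :=
      Real.rpow_le_rpow (by linarith) (by linarith) hq.le
    calc max 1 (2 ^ (1 - p)) * (r - t) ^ (p - 1) * ((r - m) ^ q / q)
        ≤ max 1 (2 ^ (1 - p)) * (r - t) ^ (p - 1) * ((r - t) ^ q / q) := by
          apply mul_le_mul_of_nonneg_left (by apply div_le_div_of_nonneg_right hmt hq.le; ) (by positivity)
      _ = max 1 (2 ^ (1 - p)) / q * (r - t) ^ (p + q - 1) := by
          rw [show p + q - 1 = (p - 1) + q by ring, Real.rpow_add hrt]; ring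
  calc ∫⁻ s in Ioo t r, ENNReal.ofReal ((s - t) ^ (p - 1) * (r - s) ^ (q - 1))
      ≤ ∫⁻ s in Ioo t m ∪ Ico m r, ENNReal.ofReal ((s - t) ^ (p - 1) * (r - s) ^ (q - 1)) :=
        lintegral_mono_set hsub
    _ ≤ (∫⁻ s in Ioo t m, ENNReal.ofReal ((s - t) ^ (p - 1) * (r - s) ^ (q - 1))) +
        ∫⁻ s in Ico m r, ENNReal.ofReal ((s - t) ^ (p - 1) * (r - s) ^ (q - 1)) :=
        lintegral_union_le _ _ _
    _ ≤ ENNReal.ofReal (max 1 (2 ^ (1 - q)) / p * (r - t) ^ (p + q - 1)) +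
        ENNReal.ofReal (max 1 (2 ^ (1 - p)) / q * (r - t) ^ (p + q - 1)) := add_le_add key1 key2
    _ = ENNReal.ofReal (Ck p q * (r - t) ^ (p + q - 1)) := by
        rw [← ENNReal.ofReal_add (by positivity) (by positivity)]
        congr 1
        rw [Ck]; ring

lemma swap_lemma {t T γ β : ℝ} (htT : t < T) {U : ℝ → ℝ≥0∞} (hU : Measurable U) :
    ∫⁻ s in Ioo t T, ENNReal.ofReal ((s - t) ^ (γ - 1)) *
        ∫⁻ r in Ioo s T, ENNReal.ofReal ((r - s) ^ (β - 1)) * U r =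
    ∫⁻ r in Ioo t T, (∫⁻ s in Ioo t r,
        ENNReal.ofReal ((s - t) ^ (γ - 1)) * ENNReal.ofReal ((r - s) ^ (β - 1))) * U r := by
  set F : ℝ → ℝ → ℝ≥0∞ := fun s r => ENNReal.ofReal ((s - t) ^ (γ - 1)) *
    ({q : ℝ × ℝ | q.1 < q.2}.indicator
      (fun q => ENNReal.ofReal ((q.2 - q.1) ^ (β - 1)) * U q.2) (s, r)) with hF
  have hmes : Measurable (Function.uncurry F) := by
    apply Measurable.mul
    · fun_prop
    · apply Measurable.indicator
      · fun_prop
      · exact measurableSet_lt measurable_fst measurable_snd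
  have hswap : ∫⁻ s in Ioo t T, ∫⁻ r in Ioo t T, F s r =
      ∫⁻ r in Ioo t T, ∫⁻ s in Ioo t T, F s r :=
    lintegral_lintegral_swap hmes.aemeasurable
  have hL : ∫⁻ s in Ioo t T, ∫⁻ r in Ioo t T, F s r =
      ∫⁻ s in Ioo t T, ENNReal.ofReal ((s - t) ^ (γ - 1)) *
        ∫⁻ r in Ioo s T, ENNReal.ofReal ((r - s) ^ (β - 1)) * U r := by
    refine lintegral_congr_ae ?_
    filter_upwards [self_mem_ae_restrict measurableSet_Ioo] with s hs
    have h1 : ∀ r : ℝ, F s r = ENNReal.ofReal ((s - t) ^ (γ - 1)) *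
        (Ioi s).indicator (fun r => ENNReal.ofReal ((r - s) ^ (β - 1)) * U r) r := by
      intro r
      rw [hF]
      by_cases h : s < r
      · simp [Set.indicator_of_mem, h, Set.mem_setOf_eq, Set.mem_Ioi]
      · simp [Set.indicator_of_notMem, h, Set.mem_setOf_eq, Set.mem_Ioi]
    simp_rw [h1]
    rw [lintegral_const_mul' _ _ ENNReal.ofReal_ne_top]
    congr 1
    rw [lintegral_indicator measurableSet_Ioi, Measure.restrict_restrict measurableSet_Ioi]
    have hset : Ioi s ∩ Ioo t T = Ioo s T := by
      ext r
      simp only [Set.mem_inter_iff, Set.mem_Ioi, Set.mem_Ioo]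
      constructor
      · rintro ⟨h1', h2', h3'⟩; exact ⟨h1', h3'⟩
      · rintro ⟨h1', h2'⟩; exact ⟨h1', lt_trans hs.1 h1', h2'⟩
    rw [hset]
  have hR : ∫⁻ r in Ioo t T, ∫⁻ s in Ioo t T, F s r =
      ∫⁻ r in Ioo t T, (∫⁻ s in Ioo t r,
        ENNReal.ofReal ((s - t) ^ (γ - 1)) * ENNReal.ofReal ((r - s) ^ (β - 1))) * U r := by
    refine lintegral_congr_ae ?_
    filter_upwards [self_mem_ae_restrict measurableSet_Ioo] with r hr
    have h1 : ∀ s : ℝ, F s r = (Iio r).indicator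
        (fun s => (ENNReal.ofReal ((s - t) ^ (γ - 1)) * ENNReal.ofReal ((r - s) ^ (β - 1))) * U r) s := by
      intro s
      rw [hF]
      by_cases h : s < r
      · simp [Set.indicator_of_mem, h, Set.mem_setOf_eq, Set.mem_Iio, mul_assoc]
      · simp [Set.indicator_of_notMem, h, Set.mem_setOf_eq, Set.mem_Iio]
    simp_rw [h1]
    rw [lintegral_indicator measurableSet_Iio, Measure.restrict_restrict measurableSet_Iio]
    have hset : Iio r ∩ Ioo t T = Ioo t r := by
      ext s
      simp only [Set.mem_inter_iff, Set.mem_Iio, Set.mem_Ioo]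
      constructor
      · rintro ⟨h1', h2', h3'⟩; exact ⟨h2', h1'⟩
      · rintro ⟨h1', h2'⟩; exact ⟨h2', h1', lt_trans h2' hr.2⟩
    rw [hset]
    exact lintegral_mul_const _ (by fun_prop)
  rw [← hL, hswap, hR]

lemma lint_form {b α β T a : ℝ} (hb : 0 ≤ b) (hβ : 0 < β) {u : ℝ → ℝ}
    (hnn : ∀ x, 0 ≤ u x)
    (h : ∀ᵐ t ∂(volume.restrict (Ico 0 T)),
      u t ≤ a * (T - t) ^ (-α) + b * ∫ s in t..T, (s - t) ^ (β - 1) * u s) :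
    ∀ᵐ t ∂(volume.restrict (Ico 0 T)),
      ENNReal.ofReal (u t) ≤ ENNReal.ofReal (a * (T - t) ^ (-α)) +
        ENNReal.ofReal b * ∫⁻ s in Ioo t T,
          ENNReal.ofReal ((s - t) ^ (β - 1)) * ENNReal.ofReal (u s) := by
  filter_upwards [h, self_mem_ae_restrict measurableSet_Ico] with t ht htm
  calc ENNReal.ofReal (u t)
      ≤ ENNReal.ofReal (a * (T - t) ^ (-α) + b * ∫ s in t..T, (s - t) ^ (β - 1) * u s) :=
        ENNReal.ofReal_le_ofReal ht
    _ ≤ ENNReal.ofReal (a * (T - t) ^ (-α)) +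
        ENNReal.ofReal (b * ∫ s in t..T, (s - t) ^ (β - 1) * u s) := ENNReal.ofReal_add_le
    _ ≤ ENNReal.ofReal (a * (T - t) ^ (-α)) +
        ENNReal.ofReal b * ∫⁻ s in Ioo t T,
          ENNReal.ofReal ((s - t) ^ (β - 1)) * ENNReal.ofReal (u s) := by
        gcongr
        rw [ENNReal.ofReal_mul hb]
        gcongr
        have hIoo : (∫ s in t..T, (s - t) ^ (β - 1) * u s) =
            ∫ s in Ioo t T, (s - t) ^ (β - 1) * u s := by
          rw [intervalIntegral.integral_of_le htm.2.le, integral_Ioc_eq_integral_Ioo]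
        rw [hIoo]
        by_cases hInt : IntegrableOn (fun s => (s - t) ^ (β - 1) * u s) (Ioo t T)
        · rw [ofReal_integral_eq_lintegral_ofReal hInt ?_]
          · refine le_of_eq (lintegral_congr_ae ?_)
            filter_upwards [self_mem_ae_restrict measurableSet_Ioo] with s hs
            rw [ENNReal.ofReal_mul (Real.rpow_nonneg (by linarith [hs.1]) _)]
          · filter_upwards [self_mem_ae_restrict measurableSet_Ioo] with s hs
            exact mul_nonneg (Real.rpow_nonneg (by linarith [hs.1]) _) (hnn s)
        · rw [integral_undef hInt]
          simp

lemma iter {b α β T : ℝ} (hb : 1 ≤ b) (hα0 : 0 ≤ α) (hα1 : α < 1) (hβ : 0 < β) (hT : 0 < T)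
    (k : ℕ) :
    ∃ c d : ℝ, 0 < c ∧ 0 < d ∧
      ∀ a u, 0 ≤ a → Measurable u → (∀ x, 0 ≤ u x) →
        (∀ᵐ t ∂(volume.restrict (Ico 0 T)),
          u t ≤ a * (T - t) ^ (-α) + b * ∫ s in t..T, (s - t) ^ (β - 1) * u s) →
        ∀ᵐ t ∂(volume.restrict (Ico 0 T)),
          ENNReal.ofReal (u t) ≤ ENNReal.ofReal (a * c * (T - t) ^ (-α)) +
            ENNReal.ofReal d * ∫⁻ s in Ioo t T,
              ENNReal.ofReal ((s - t) ^ ((k + 1 : ℝ) * β - 1)) * ENNReal.ofReal (u s) := by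
  induction k with
  | zero =>
    refine ⟨1, b, one_pos, by linarith, fun a u ha hu hnn h => ?_⟩
    have := lint_form (by linarith : (0:ℝ) ≤ b) hβ hnn h
    filter_upwards [this] with t ht
    simpa [mul_one, one_mul] using ht
  | succ k IH =>
    obtain ⟨c, d, hc, hd, Hk⟩ := IH
    set γ : ℝ := (k + 1 : ℝ) * β with hγdef
    have hγ : 0 < γ := by positivity
    have h1α : 0 < 1 - α := by linarith
    refine ⟨c + d * Ck γ (1 - α) * T ^ γ, d * b * Ck γ β, ?_, ?_, ?_⟩
    · have := Ck_pos hγ h1α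
      have : 0 < d * Ck γ (1 - α) * T ^ γ := by positivity
      linarith
    · have := Ck_pos hγ hβ
      positivity
    intro a u ha hu hnn h
    have hbase := lint_form (by linarith : (0:ℝ) ≤ b) hβ hnn h
    have hUmes : Measurable (fun s => ENNReal.ofReal (u s)) := by fun_prop
    filter_upwards [Hk a u ha hu hnn h, self_mem_ae_restrict measurableSet_Ico] with t hkt htm
    have htT : t < T := htm.2
    have ht0 : (0:ℝ) ≤ t := htm.1
    have hTt : (0:ℝ) < T - t := by linarith
    -- bound for J γ t
    have hsub : Ioo t T ⊆ Ico 0 T := fun s hs => ⟨by linarith [hs.1], hs.2⟩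
    have hbase' : ∀ᵐ s ∂(volume.restrict (Ioo t T)),
        ENNReal.ofReal (u s) ≤ ENNReal.ofReal (a * (T - s) ^ (-α)) +
          ENNReal.ofReal b * ∫⁻ r in Ioo s T,
            ENNReal.ofReal ((r - s) ^ (β - 1)) * ENNReal.ofReal (u r) :=
      ae_restrict_of_ae_restrict_of_subset hsub hbase
    have hJ : (∫⁻ s in Ioo t T, ENNReal.ofReal ((s - t) ^ (γ - 1)) * ENNReal.ofReal (u s)) ≤
        ENNReal.ofReal (a * (Ck γ (1 - α) * T ^ γ) * (T - t) ^ (-α)) +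
          ENNReal.ofReal (b * Ck γ β) * ∫⁻ s in Ioo t T,
            ENNReal.ofReal ((s - t) ^ (γ + β - 1)) * ENNReal.ofReal (u s) := by
      have step1 : (∫⁻ s in Ioo t T, ENNReal.ofReal ((s - t) ^ (γ - 1)) * ENNReal.ofReal (u s)) ≤
          ∫⁻ s in Ioo t T, (ENNReal.ofReal ((s - t) ^ (γ - 1)) * ENNReal.ofReal (a * (T - s) ^ (-α)) +
            ENNReal.ofReal b * (ENNReal.ofReal ((s - t) ^ (γ - 1)) *
              ∫⁻ r in Ioo s T, ENNReal.ofReal ((r - s) ^ (β - 1)) * ENNReal.ofReal (u r))) := by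
        refine lintegral_mono_ae ?_
        filter_upwards [hbase'] with s hsb
        calc ENNReal.ofReal ((s - t) ^ (γ - 1)) * ENNReal.ofReal (u s)
            ≤ ENNReal.ofReal ((s - t) ^ (γ - 1)) * (ENNReal.ofReal (a * (T - s) ^ (-α)) +
              ENNReal.ofReal b * ∫⁻ r in Ioo s T,
                ENNReal.ofReal ((r - s) ^ (β - 1)) * ENNReal.ofReal (u r)) :=
              mul_le_mul_right hsb _
          _ = _ := by ring
      have step2 : (∫⁻ s in Ioo t T, (ENNReal.ofReal ((s - t) ^ (γ - 1)) * ENNReal.ofReal (a * (T - s) ^ (-α)) +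
            ENNReal.ofReal b * (ENNReal.ofReal ((s - t) ^ (γ - 1)) *
              ∫⁻ r in Ioo s T, ENNReal.ofReal ((r - s) ^ (β - 1)) * ENNReal.ofReal (u r)))) =
          (∫⁻ s in Ioo t T, ENNReal.ofReal ((s - t) ^ (γ - 1)) * ENNReal.ofReal (a * (T - s) ^ (-α))) +
          ENNReal.ofReal b * ∫⁻ s in Ioo t T, ENNReal.ofReal ((s - t) ^ (γ - 1)) *
              ∫⁻ r in Ioo s T, ENNReal.ofReal ((r - s) ^ (β - 1)) * ENNReal.ofReal (u r) := by
        rw [lintegral_add_left (by fun_prop), lintegral_const_mul' _ _ ENNReal.ofReal_ne_top]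
      -- A term
      have hA : (∫⁻ s in Ioo t T, ENNReal.ofReal ((s - t) ^ (γ - 1)) * ENNReal.ofReal (a * (T - s) ^ (-α))) ≤
          ENNReal.ofReal (a * (Ck γ (1 - α) * T ^ γ) * (T - t) ^ (-α)) := by
        have e1 : (∫⁻ s in Ioo t T, ENNReal.ofReal ((s - t) ^ (γ - 1)) * ENNReal.ofReal (a * (T - s) ^ (-α))) =
            ENNReal.ofReal a * ∫⁻ s in Ioo t T,
              ENNReal.ofReal ((s - t) ^ (γ - 1) * (T - s) ^ ((1 - α) - 1)) := by
          rw [← lintegral_const_mul' _ _ ENNReal.ofReal_ne_top]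
          refine lintegral_congr_ae ?_
          filter_upwards [self_mem_ae_restrict measurableSet_Ioo] with s hs
          rw [ENNReal.ofReal_mul ha,
            ENNReal.ofReal_mul (Real.rpow_nonneg (by linarith [hs.1]) _)]
          rw [show (1 - α) - 1 = -α by ring]
          ring
        rw [e1]
        calc ENNReal.ofReal a * ∫⁻ s in Ioo t T,
              ENNReal.ofReal ((s - t) ^ (γ - 1) * (T - s) ^ ((1 - α) - 1))
            ≤ ENNReal.ofReal a * ENNReal.ofReal (Ck γ (1 - α) * (T - t) ^ (γ + (1 - α) - 1)) :=
              mul_le_mul_right (kernel_bound hγ h1α htT) _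
          _ ≤ ENNReal.ofReal (a * (Ck γ (1 - α) * T ^ γ) * (T - t) ^ (-α)) := by
              rw [← ENNReal.ofReal_mul ha]
              apply ENNReal.ofReal_le_ofReal
              have e2 : (T - t) ^ (γ + (1 - α) - 1) = (T - t) ^ γ * (T - t) ^ (-α) := by
                rw [← Real.rpow_add hTt]; ring_nf
              rw [e2]
              have e3 : (T - t) ^ γ ≤ T ^ γ := Real.rpow_le_rpow (by linarith) (by linarith) hγ.le
              have := Ck_pos hγ h1α
              calc a * (Ck γ (1 - α) * ((T - t) ^ γ * (T - t) ^ (-α)))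
                  ≤ a * (Ck γ (1 - α) * (T ^ γ * (T - t) ^ (-α))) := by
                    apply mul_le_mul_of_nonneg_left _ ha
                    apply mul_le_mul_of_nonneg_left _ this.le
                    exact mul_le_mul_of_nonneg_right e3 (Real.rpow_nonneg hTt.le _)
                _ = a * (Ck γ (1 - α) * T ^ γ) * (T - t) ^ (-α) := by ring
      -- B term
      have hB : (∫⁻ s in Ioo t T, ENNReal.ofReal ((s - t) ^ (γ - 1)) *
            ∫⁻ r in Ioo s T, ENNReal.ofReal ((r - s) ^ (β - 1)) * ENNReal.ofReal (u r)) ≤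
          ENNReal.ofReal (Ck γ β) * ∫⁻ s in Ioo t T,
            ENNReal.ofReal ((s - t) ^ (γ + β - 1)) * ENNReal.ofReal (u s) := by
        rw [swap_lemma htT hUmes]
        calc (∫⁻ r in Ioo t T, (∫⁻ s in Ioo t r,
              ENNReal.ofReal ((s - t) ^ (γ - 1)) * ENNReal.ofReal ((r - s) ^ (β - 1))) * ENNReal.ofReal (u r))
            ≤ ∫⁻ r in Ioo t T, ENNReal.ofReal (Ck γ β * (r - t) ^ (γ + β - 1)) * ENNReal.ofReal (u r) := by
              refine lintegral_mono_ae ?_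
              filter_upwards [self_mem_ae_restrict measurableSet_Ioo] with r hr
              refine mul_le_mul_left ?_ _
              have e4 : (∫⁻ s in Ioo t r,
                  ENNReal.ofReal ((s - t) ^ (γ - 1)) * ENNReal.ofReal ((r - s) ^ (β - 1))) =
                  ∫⁻ s in Ioo t r, ENNReal.ofReal ((s - t) ^ (γ - 1) * (r - s) ^ (β - 1)) := by
                refine lintegral_congr_ae ?_
                filter_upwards [self_mem_ae_restrict measurableSet_Ioo] with s hs
                rw [ENNReal.ofReal_mul (Real.rpow_nonneg (by linarith [hs.1]) _)]
              rw [e4]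
              exact kernel_bound hγ hβ hr.1
          _ = ENNReal.ofReal (Ck γ β) * ∫⁻ s in Ioo t T,
              ENNReal.ofReal ((s - t) ^ (γ + β - 1)) * ENNReal.ofReal (u s) := by
              rw [← lintegral_const_mul' _ _ ENNReal.ofReal_ne_top]
              refine lintegral_congr_ae ?_
              filter_upwards [self_mem_ae_restrict measurableSet_Ioo] with s hs
              rw [ENNReal.ofReal_mul (Ck_pos hγ hβ).le, mul_assoc]
      calc (∫⁻ s in Ioo t T, ENNReal.ofReal ((s - t) ^ (γ - 1)) * ENNReal.ofReal (u s))
          ≤ _ := step1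
        _ = _ := step2
        _ ≤ ENNReal.ofReal (a * (Ck γ (1 - α) * T ^ γ) * (T - t) ^ (-α)) +
            ENNReal.ofReal b * (ENNReal.ofReal (Ck γ β) * ∫⁻ s in Ioo t T,
              ENNReal.ofReal ((s - t) ^ (γ + β - 1)) * ENNReal.ofReal (u s)) := by
            exact add_le_add hA (mul_le_mul_right hB _)
        _ = ENNReal.ofReal (a * (Ck γ (1 - α) * T ^ γ) * (T - t) ^ (-α)) +
            ENNReal.ofReal (b * Ck γ β) * ∫⁻ s in Ioo t T,
              ENNReal.ofReal ((s - t) ^ (γ + β - 1)) * ENNReal.ofReal (u s) := by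
            rw [ENNReal.ofReal_mul (by linarith : (0:ℝ) ≤ b)]; ring
    -- assemble
    have hexp : ((k + 1 : ℕ) + 1 : ℝ) * β - 1 = γ + β - 1 := by
      push_cast [hγdef]; ring
    calc ENNReal.ofReal (u t)
        ≤ ENNReal.ofReal (a * c * (T - t) ^ (-α)) +
          ENNReal.ofReal d * ∫⁻ s in Ioo t T,
            ENNReal.ofReal ((s - t) ^ (γ - 1)) * ENNReal.ofReal (u s) := hkt
      _ ≤ ENNReal.ofReal (a * c * (T - t) ^ (-α)) +
          ENNReal.ofReal d * (ENNReal.ofReal (a * (Ck γ (1 - α) * T ^ γ) * (T - t) ^ (-α)) +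
            ENNReal.ofReal (b * Ck γ β) * ∫⁻ s in Ioo t T,
              ENNReal.ofReal ((s - t) ^ (γ + β - 1)) * ENNReal.ofReal (u s)) :=
          add_le_add_right (mul_le_mul_right hJ _) _
      _ = ENNReal.ofReal (a * (c + d * Ck γ (1 - α) * T ^ γ) * (T - t) ^ (-α)) +
          ENNReal.ofReal (d * b * Ck γ β) * ∫⁻ s in Ioo t T,
            ENNReal.ofReal ((s - t) ^ (γ + β - 1)) * ENNReal.ofReal (u s) := by
          have hX : (0:ℝ) ≤ (T - t) ^ (-α) := Real.rpow_nonneg hTt.le _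
          have hCk1 := (Ck_pos hγ h1α).le
          have hTγ : (0:ℝ) ≤ T ^ γ := Real.rpow_nonneg hT.le _
          rw [mul_add, ← mul_assoc (ENNReal.ofReal d),
            ← ENNReal.ofReal_mul (q := b * Ck γ β) hd.le,
            ← ENNReal.ofReal_mul (q := a * (Ck γ (1 - α) * T ^ γ) * (T - t) ^ (-α)) hd.le,
            ← add_assoc,
            ← ENNReal.ofReal_add (mul_nonneg (mul_nonneg ha hc.le) hX)
              (mul_nonneg hd.le (mul_nonneg (mul_nonneg ha (mul_nonneg hCk1 hTγ)) hX))]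
          rw [show a * c * (T - t) ^ (-α) + d * (a * (Ck γ (1 - α) * T ^ γ) * (T - t) ^ (-α))
              = a * (c + d * Ck γ (1 - α) * T ^ γ) * (T - t) ^ (-α) from by ring,
            show d * (b * Ck γ β) = d * b * Ck γ β from (mul_assoc d b _).symm]
      _ = ENNReal.ofReal (a * (c + d * Ck γ (1 - α) * T ^ γ) * (T - t) ^ (-α)) +
          ENNReal.ofReal (d * b * Ck γ β) * ∫⁻ s in Ioo t T,
            ENNReal.ofReal ((s - t) ^ (((k + 1 : ℕ) + 1 : ℝ) * β - 1)) * ENNReal.ofReal (u s) := by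
          rw [hexp]

open intervalIntegral in
lemma int_rpow_right_integrable {q m r : ℝ} (hq : 0 < q) (hmr : m ≤ r) :
    IntegrableOn (fun s => (r - s) ^ (q - 1)) (Ioo m r) := by
  have hii : IntervalIntegrable (fun s => (r - s) ^ (q - 1)) volume m r := by
    have := (intervalIntegrable_rpow' (a := r - r) (b := r - m) (r := q - 1) (by linarith)).comp_sub_left r
    simpa using this.symm
  exact ((intervalIntegrable_iff_integrableOn_Ioc_of_le hmr).mp hii).mono_set Ioo_subset_Ioc_self

open intervalIntegral in
lemma int_rpow_right_val {q m r : ℝ} (hq : 0 < q) (hmr : m ≤ r) :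
    ∫ s in Ioo m r, (r - s) ^ (q - 1) = (r - m) ^ q / q := by
  have h1 : ∫ s in Ioo m r, (r - s) ^ (q - 1) = ∫ s in m..r, (r - s) ^ (q - 1) := by
    rw [integral_of_le hmr, ← integral_Ioc_eq_integral_Ioo]
  rw [h1, integral_comp_sub_left (fun x => x ^ (q - 1)) r]
  simp only [sub_self]
  rw [integral_rpow (Or.inl (by linarith))]
  rw [Real.zero_rpow (by linarith), sub_add_cancel, sub_zero]

set_option maxHeartbeats 1600000 in
/-- Backward Gronwall inequality with singular weight and weakly singular kernel. -/
theorem backward_gronwall_weakly_singular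
    (b α β T : ℝ) (hb : 0 ≤ b) (hα0 : 0 ≤ α) (hα1 : α < 1) (hβ : 0 < β) (hT : 0 < T) :
    ∃ M : ℝ, 0 < M ∧
      ∀ (a : ℝ) (u : ℝ → ℝ), 0 ≤ a →
        IntegrableOn u (Set.Icc 0 T) →
        (∀ t ∈ Set.Icc 0 T, 0 ≤ u t) →
        (∀ᵐ t ∂(volume.restrict (Set.Ico 0 T)),
          u t ≤ a * (T - t) ^ (-α) + b * ∫ s in t..T, (s - t) ^ (β - 1) * u s) →
        (∀ᵐ t ∂(volume.restrict (Set.Ico 0 T)),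
          u t ≤ a * M * (T - t) ^ (-α)) := by
  have h1α : 0 < 1 - α := by linarith
  set b₁ := max b 1 with hb₁
  have hb₁1 : (1:ℝ) ≤ b₁ := le_max_right _ _
  have hbb₁ : b ≤ b₁ := le_max_left _ _
  set k := ⌈1 / β⌉₊ with hk
  have hg1 : 1 ≤ ((k : ℝ) + 1) * β := by
    have h1 : 1 / β ≤ (k : ℝ) := Nat.le_ceil _
    have h2 : 1 / β * β ≤ ((k : ℝ) + 1) * β := by nlinarith
    rwa [one_div, inv_mul_cancel₀ (ne_of_gt hβ)] at h2
  obtain ⟨c, d, hc, hd, H⟩ := iter hb₁1 hα0 hα1 hβ hT k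
  set C := d * T ^ (((k : ℝ) + 1) * β - 1) with hC
  have hCpos : 0 < C := mul_pos hd (Real.rpow_pos_of_pos hT _)
  set A := c * T ^ (1 - α) / (1 - α) with hA
  have hApos : 0 < A := div_pos (mul_pos hc (Real.rpow_pos_of_pos hT _)) h1α
  set M := c + C * A * Real.exp (C * T) * T ^ α with hM
  have hMpos : 0 < M := by
    have h3 : 0 < C * A * Real.exp (C * T) * T ^ α :=
      mul_pos (mul_pos (mul_pos hCpos hApos) (Real.exp_pos _)) (Real.rpow_pos_of_pos hT α)
    rw [hM]
    linarith
  refine ⟨M, hMpos, ?_⟩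
  intro a u ha hu hnn h
  -- measurable nonnegative representative
  have hsm := hu.aestronglyMeasurable
  set w : ℝ → ℝ := fun x => max (hsm.mk u x) 0 with hw
  have hwmeas : Measurable w := (hsm.stronglyMeasurable_mk.measurable).max measurable_const
  have hwnn : ∀ x, 0 ≤ w x := fun x => le_max_right _ _
  have hweq : ∀ᵐ x ∂(volume.restrict (Icc 0 T)), u x = w x := by
    filter_upwards [hsm.ae_eq_mk, self_mem_ae_restrict measurableSet_Icc] with x hx hmem
    rw [hw]
    simp only
    rw [← hx, max_eq_left (hnn x hmem)]
  have hwint : IntegrableOn w (Icc 0 T) := hu.congr hweq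
  have hweq' : ∀ᵐ x ∂(volume.restrict (Ico 0 T)), u x = w x :=
    ae_restrict_of_ae_restrict_of_subset Ico_subset_Icc_self hweq
  have hweqv : ∀ᵐ x ∂(volume : Measure ℝ), x ∈ Icc 0 T → u x = w x :=
    (ae_restrict_iff' measurableSet_Icc).mp hweq
  -- hypothesis for w with constant b₁
  have hhw : ∀ᵐ t ∂(volume.restrict (Ico 0 T)),
      w t ≤ a * (T - t) ^ (-α) + b₁ * ∫ s in t..T, (s - t) ^ (β - 1) * w s := by
    filter_upwards [h, hweq', self_mem_ae_restrict measurableSet_Ico] with t ht hteq htm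
    have hint_eq : (∫ s in t..T, (s - t) ^ (β - 1) * u s) =
        ∫ s in t..T, (s - t) ^ (β - 1) * w s := by
      apply intervalIntegral.integral_congr_ae
      filter_upwards [hweqv] with s hs hsmem
      rw [Set.uIoc_of_le htm.2.le] at hsmem
      rw [hs ⟨le_trans htm.1 hsmem.1.le, hsmem.2⟩]
    have hIw : 0 ≤ ∫ s in t..T, (s - t) ^ (β - 1) * w s :=
      intervalIntegral.integral_nonneg htm.2.le
        (fun s hs => mul_nonneg (Real.rpow_nonneg (by linarith [hs.1]) _) (hwnn s))
    calc w t = u t := hteq.symm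
      _ ≤ a * (T - t) ^ (-α) + b * ∫ s in t..T, (s - t) ^ (β - 1) * u s := ht
      _ = a * (T - t) ^ (-α) + b * ∫ s in t..T, (s - t) ^ (β - 1) * w s := by rw [hint_eq]
      _ ≤ a * (T - t) ^ (-α) + b₁ * ∫ s in t..T, (s - t) ^ (β - 1) * w s :=
          add_le_add_right (mul_le_mul_of_nonneg_right hbb₁ hIw) _
  have hk2 := H a w ha hwmeas hwnn hhw
  -- the continuous auxiliary functions
  set uu : ℝ → ℝ := (Icc 0 T).indicator w with huu
  have huuint : Integrable uu := (integrable_indicator_iff measurableSet_Icc).mpr hwint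
  have huunn : ∀ x, 0 ≤ uu x := fun x => Set.indicator_nonneg (fun y _ => hwnn y) x
  set v : ℝ → ℝ := fun t => ∫ s in t..T, uu s with hv
  have hvcont : Continuous v := by
    have h5 : Continuous fun t => ∫ s in T..t, uu s :=
      intervalIntegral.continuous_primitive (fun a b => huuint.intervalIntegrable) T
    have e : v = fun t => -(∫ s in T..t, uu s) := by
      funext t; rw [hv]; simp only; rw [intervalIntegral.integral_symm]
    rw [e]; exact h5.neg
  have hvnn : ∀ t, t ≤ T → 0 ≤ v t := fun t htT =>
    intervalIntegral.integral_nonneg htT (fun s _ => huunn s)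
  have hvw : ∀ t ∈ Ico 0 T, v t = ∫ s in Ioo t T, w s := by
    intro t htm
    rw [hv]
    simp only
    rw [intervalIntegral.integral_of_le htm.2.le, integral_Ioc_eq_integral_Ioo]
    apply setIntegral_congr_fun measurableSet_Ioo
    intro s hs
    rw [huu]
    exact Set.indicator_of_mem (mem_Icc.mpr ⟨by linarith [hs.1, htm.1], hs.2.le⟩) w
  -- real form of the iterated bound
  have hreal : ∀ᵐ t ∂(volume.restrict (Ico 0 T)),
      w t ≤ a * c * (T - t) ^ (-α) + C * v t := by
    filter_upwards [hk2, self_mem_ae_restrict measurableSet_Ico] with t hkt htm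
    have htT : t < T := htm.2
    have hwi : IntegrableOn w (Ioo t T) :=
      hwint.mono_set (fun s hs => mem_Icc.mpr ⟨by linarith [hs.1, htm.1], hs.2.le⟩)
    have hiw_nn : 0 ≤ ∫ s in Ioo t T, w s :=
      setIntegral_nonneg measurableSet_Ioo (fun s _ => hwnn s)
    have hlw : (∫⁻ s in Ioo t T, ENNReal.ofReal (w s)) =
        ENNReal.ofReal (∫ s in Ioo t T, w s) :=
      (ofReal_integral_eq_lintegral_ofReal hwi
        (Filter.Eventually.of_forall (fun s => hwnn s))).symm
    have hker : (∫⁻ s in Ioo t T,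
          ENNReal.ofReal ((s - t) ^ (((k : ℝ) + 1) * β - 1)) * ENNReal.ofReal (w s)) ≤
        ENNReal.ofReal (T ^ (((k : ℝ) + 1) * β - 1)) *
          ENNReal.ofReal (∫ s in Ioo t T, w s) := by
      calc (∫⁻ s in Ioo t T,
            ENNReal.ofReal ((s - t) ^ (((k : ℝ) + 1) * β - 1)) * ENNReal.ofReal (w s))
          ≤ ∫⁻ s in Ioo t T,
            ENNReal.ofReal (T ^ (((k : ℝ) + 1) * β - 1)) * ENNReal.ofReal (w s) := by
            refine lintegral_mono_ae ?_
            filter_upwards [self_mem_ae_restrict measurableSet_Ioo] with s hs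
            refine mul_le_mul_left (ENNReal.ofReal_le_ofReal
              (Real.rpow_le_rpow (by linarith [hs.1])
                (by linarith [hs.2, htm.1]) (by linarith))) _
        _ = ENNReal.ofReal (T ^ (((k : ℝ) + 1) * β - 1)) *
            ∫⁻ s in Ioo t T, ENNReal.ofReal (w s) :=
            lintegral_const_mul' _ _ ENNReal.ofReal_ne_top
        _ = _ := by rw [hlw]
    have h2 : ENNReal.ofReal (w t) ≤ ENNReal.ofReal (a * c * (T - t) ^ (-α) + C * v t) := by
      calc ENNReal.ofReal (w t)
          ≤ ENNReal.ofReal (a * c * (T - t) ^ (-α)) +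
            ENNReal.ofReal d * ∫⁻ s in Ioo t T,
              ENNReal.ofReal ((s - t) ^ (((k : ℝ) + 1) * β - 1)) * ENNReal.ofReal (w s) := hkt
        _ ≤ ENNReal.ofReal (a * c * (T - t) ^ (-α)) +
            ENNReal.ofReal d * (ENNReal.ofReal (T ^ (((k : ℝ) + 1) * β - 1)) *
              ENNReal.ofReal (∫ s in Ioo t T, w s)) :=
            add_le_add_right (mul_le_mul_right hker _) _
        _ = ENNReal.ofReal (a * c * (T - t) ^ (-α) + C * v t) := by
            rw [hvw t htm, ← ENNReal.ofReal_mul (Real.rpow_nonneg hT.le _),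
              ← ENNReal.ofReal_mul hd.le,
              ← ENNReal.ofReal_add (mul_nonneg (mul_nonneg ha hc.le)
                (Real.rpow_nonneg (by linarith) _))
                (mul_nonneg hd.le (mul_nonneg (Real.rpow_nonneg hT.le _) hiw_nn))]
            congr 1
            rw [hC]
            ring
    have hrhs : 0 ≤ a * c * (T - t) ^ (-α) + C * v t :=
      add_nonneg (mul_nonneg (mul_nonneg ha hc.le) (Real.rpow_nonneg (by linarith) _))
        (mul_nonneg hCpos.le (hvnn t htT.le))
    exact (ENNReal.ofReal_le_ofReal_iff hrhs).mp h2
  -- integrated bound for v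
  have hvb : ∀ t ∈ Icc 0 T, v t ≤ a * A + C * ∫ s in t..T, v s := by
    intro t htm
    have haA : 0 ≤ a * A := mul_nonneg ha hApos.le
    rcases eq_or_lt_of_le htm.2 with heq | htT
    · subst heq
      rw [hv]
      simp only [intervalIntegral.integral_same, mul_zero, add_zero]
      exact haA
    have hint1 : IntegrableOn (fun s => (T - s) ^ ((1 - α) - 1)) (Ioo t T) :=
      int_rpow_right_integrable h1α htm.2
    have hintv : IntegrableOn v (Ioo t T) :=
      (hvcont.continuousOn.integrableOn_Icc).mono_set Ioo_subset_Icc_self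
    have hint2 : IntegrableOn (fun s => a * c * (T - s) ^ (-α) + C * v s) (Ioo t T) := by
      refine Integrable.add ?_ (hintv.const_mul _)
      have := hint1.const_mul (a * c)
      simpa [show (1 - α) - 1 = -α by ring] using this
    have hmono : v t ≤ ∫ s in Ioo t T, (a * c * (T - s) ^ (-α) + C * v s) := by
      rw [hvw t ⟨htm.1, htT⟩]
      refine integral_mono_of_nonneg (Filter.Eventually.of_forall (fun s => hwnn s)) hint2 ?_
      exact ae_restrict_of_ae_restrict_of_subset
        (fun s hs => mem_Ico.mpr ⟨by linarith [hs.1, htm.1], hs.2⟩) hreal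
    have hval : ∫ s in Ioo t T, (T - s) ^ ((1 - α) - 1) = (T - t) ^ (1 - α) / (1 - α) :=
      int_rpow_right_val h1α htm.2
    calc v t ≤ ∫ s in Ioo t T, (a * c * (T - s) ^ (-α) + C * v s) := hmono
      _ = a * c * (∫ s in Ioo t T, (T - s) ^ (-α)) + C * ∫ s in Ioo t T, v s := by
          have hint1' : IntegrableOn (fun s => (T - s) ^ (-α)) (Ioo t T) := by
            have := hint1
            simpa [show (1 - α) - 1 = -α by ring] using this
          rw [integral_add (hint1'.const_mul _) (hintv.const_mul _),
            integral_const_mul, integral_const_mul]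
      _ ≤ a * A + C * ∫ s in t..T, v s := by
          have e5 : (∫ s in Ioo t T, (T - s) ^ (-α)) = (T - t) ^ (1 - α) / (1 - α) := by
            rw [← hval]
            congr 1
            ext s
            rw [show (1 - α) - 1 = -α by ring]
          have e6 : (∫ s in Ioo t T, v s) = ∫ s in t..T, v s := by
            rw [intervalIntegral.integral_of_le htm.2, integral_Ioc_eq_integral_Ioo]
          rw [e5, e6]
          have e7 : (T - t) ^ (1 - α) ≤ T ^ (1 - α) :=
            Real.rpow_le_rpow (by linarith [htm.2]) (by linarith [htm.1]) h1α.le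
          have e8 : a * c * ((T - t) ^ (1 - α) / (1 - α)) ≤ a * A := by
            rw [hA]
            calc a * c * ((T - t) ^ (1 - α) / (1 - α))
                ≤ a * c * (T ^ (1 - α) / (1 - α)) := by
                  apply mul_le_mul_of_nonneg_left _ (mul_nonneg ha hc.le)
                  exact div_le_div_of_nonneg_right e7 h1α.le
              _ = a * (c * T ^ (1 - α) / (1 - α)) := by ring
          linarith
  -- Gronwall
  set f : ℝ → ℝ := fun τ => ∫ s in (T - τ)..T, v s with hf
  have hf0 : f 0 = 0 := by rw [hf]; simp
  have hder : ∀ τ : ℝ, HasDerivAt f (v (T - τ)) τ := by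
    intro τ
    have h2 : HasDerivAt (fun x => ∫ s in T..x, v s) (v (T - τ)) (T - τ) :=
      (hvcont.integral_hasStrictDerivAt T (T - τ)).hasDerivAt
    have h1 : HasDerivAt (fun x => ∫ s in x..T, v s) (-(v (T - τ))) (T - τ) := by
      have e : (fun x : ℝ => ∫ s in x..T, v s) = fun x => -(∫ s in T..x, v s) := by
        funext x; rw [intervalIntegral.integral_symm]
      rw [e]; exact h2.neg
    have h3 : HasDerivAt (fun τ : ℝ => T - τ) (-1) τ := (hasDerivAt_id τ).const_sub T
    have h4 := h1.comp τ h3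
    rw [neg_mul_neg, mul_one] at h4
    exact h4
  have hfcont : Continuous f := by
    have h5 : Continuous fun x => ∫ s in T..x, v s :=
      intervalIntegral.continuous_primitive
        (fun a b => hvcont.intervalIntegrable _ _) T
    have e : f = fun τ => -(∫ s in T..(T - τ), v s) := by
      funext τ; rw [hf]; simp only; rw [intervalIntegral.integral_symm]
    rw [e]
    exact (h5.comp (continuous_const.sub continuous_id)).neg
  have hfnn : ∀ τ ∈ Icc (0:ℝ) T, 0 ≤ f τ := by
    intro τ hτ
    rw [hf]
    exact intervalIntegral.integral_nonneg (by linarith [hτ.1])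
      (fun s hs => hvnn s hs.2)
  have hbound : ∀ τ ∈ Ico (0:ℝ) T, ‖v (T - τ)‖ ≤ C * ‖f τ‖ + a * A := by
    intro τ hτ
    have hτT : T - τ ∈ Icc (0:ℝ) T := mem_Icc.mpr ⟨by linarith [hτ.2], by linarith [hτ.1]⟩
    have h6 := hvb (T - τ) hτT
    have h7 : f τ = ∫ s in (T - τ)..T, v s := rfl
    rw [Real.norm_of_nonneg (hvnn _ (by linarith [hτ.1])),
      Real.norm_of_nonneg (hfnn τ (mem_Icc.mpr ⟨hτ.1, hτ.2.le⟩)), h7]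
    linarith [h6]
  have hgron := norm_le_gronwallBound_of_norm_deriv_right_le
    (f := f) (f' := fun τ => v (T - τ)) (δ := 0) (K := C) (ε := a * A) (a := 0) (b := T)
    hfcont.continuousOn (fun τ _ => (hder τ).hasDerivWithinAt)
    (by rw [hf0]; simp) hbound
  have hvbound2 : ∀ t ∈ Ico (0:ℝ) T, v t ≤ a * A * Real.exp (C * T) := by
    intro t htm
    have hτ : T - t ∈ Icc (0:ℝ) T := ⟨by linarith [htm.2], by linarith [htm.1]⟩
    have h5 := hgron (T - t) hτ
    rw [Real.norm_of_nonneg (hfnn _ hτ), gronwallBound_of_K_ne_0 hCpos.ne'] at h5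
    simp only [zero_mul, zero_add, sub_zero] at h5
    have hfτ : f (T - t) = ∫ s in t..T, v s := by
      rw [hf]
      simp only
      rw [show T - (T - t) = t by ring]
    rw [hfτ] at h5
    have h6 := hvb t ⟨htm.1, htm.2.le⟩
    have haA : 0 ≤ a * A := mul_nonneg ha hApos.le
    have hE : Real.exp (C * (T - t)) ≤ Real.exp (C * T) := by
      apply Real.exp_le_exp.mpr
      exact mul_le_mul_of_nonneg_left (by linarith [htm.1]) hCpos.le
    have h8 : C * (∫ s in t..T, v s) ≤ a * A * (Real.exp (C * (T - t)) - 1) := by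
      have := mul_le_mul_of_nonneg_left h5 hCpos.le
      calc C * (∫ s in t..T, v s) ≤ C * (a * A / C * (Real.exp (C * (T - t)) - 1)) := this
        _ = a * A * (Real.exp (C * (T - t)) - 1) := by
            field_simp
    have hexp9 : a * A + a * A * (Real.exp (C * (T - t)) - 1) =
        a * A * Real.exp (C * (T - t)) := by ring
    have h9 : v t ≤ a * A * Real.exp (C * (T - t)) := by linarith
    exact h9.trans (mul_le_mul_of_nonneg_left hE haA)
  -- conclusion
  filter_upwards [hreal, hweq', self_mem_ae_restrict measurableSet_Ico] with t ht hteq htm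
  have hTt : 0 < T - t := by linarith [htm.2]
  have hX : 0 ≤ (T - t) ^ (-α) := Real.rpow_nonneg hTt.le _
  have h1X : 1 ≤ T ^ α * (T - t) ^ (-α) := by
    have h9 : T ^ (-α) ≤ (T - t) ^ (-α) :=
      Real.rpow_le_rpow_of_nonpos hTt (by linarith [htm.1]) (by linarith)
    calc (1:ℝ) = T ^ α * T ^ (-α) := by
          rw [← Real.rpow_add hT]; simp
      _ ≤ T ^ α * (T - t) ^ (-α) :=
          mul_le_mul_of_nonneg_left h9 (Real.rpow_nonneg hT.le _)
  have h10 := hvbound2 t htm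
  calc u t = w t := hteq
    _ ≤ a * c * (T - t) ^ (-α) + C * v t := ht
    _ ≤ a * c * (T - t) ^ (-α) + C * (a * A * Real.exp (C * T)) :=
        add_le_add_right (mul_le_mul_of_nonneg_left h10 hCpos.le) _
    _ ≤ a * c * (T - t) ^ (-α) + C * (a * A * Real.exp (C * T)) * (T ^ α * (T - t) ^ (-α)) := by
        have hnn2 : 0 ≤ C * (a * A * Real.exp (C * T)) :=
          mul_nonneg hCpos.le (mul_nonneg (mul_nonneg ha hApos.le) (Real.exp_pos _).le)
        exact add_le_add_right (le_mul_of_one_le_right hnn2 h1X) _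
    _ = a * M * (T - t) ^ (-α) := by
        rw [hM]
        ring
end

section
/- Let $y, y' \in \ell^2(\mathbb{Z})$ and $k \in \mathbb{N}$. Define $f_0(y)_n = (y_{n+1} - y_n)^{2k+1} + (y_{n-1} - y_n)^{2k+1}$. Then $\langle f_0(y) - f_0(y'), y - y' \rangle_{\ell^2(\mathbb{Z})} \leq 0$, i.e., $f_0$ is dissipative on $\ell^2(\mathbb{Z})$. -/
open scoped RealInnerProductSpace
open scoped ENNReal

/-- square summability of an `lp 2` element. -/
lemma sq_summable_of_lp (x : lp (fun _ : ℤ => ℝ) 2) : Summable (fun n => (x n) ^ 2) := by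
  have h := (lp.memℓp x).summable (p := 2) (by norm_num)
  have : (fun n : ℤ => ‖x n‖ ^ (2 : ℝ≥0∞).toReal) = fun n => (x n) ^ 2 := by
    funext n
    rw [ENNReal.toReal_ofNat]
    rw [show ((2:ℝ)) = ((2:ℕ):ℝ) by norm_num, Real.rpow_natCast]
    simp [sq_abs]
  rwa [this] at h

/-- summability of squares of forward differences. -/
lemma diff_sq_summable (x : lp (fun _ : ℤ => ℝ) 2) :
    Summable (fun n : ℤ => (x (n + 1) - x n) ^ 2) := by
  have h1 : Summable (fun n : ℤ => (x (n + 1)) ^ 2) := by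
    have := (Equiv.addRight (1 : ℤ)).summable_iff (f := fun n : ℤ => (x n) ^ 2)
    exact this.2 (sq_summable_of_lp x)
  have h2 := sq_summable_of_lp x
  refine Summable.of_nonneg_of_le (fun n => sq_nonneg _) (fun n => ?_)
    (((h1.add h2).mul_left 2))
  nlinarith [sq_nonneg (x (n+1) + x n)]

/-- Dissipativity of the spin-system nonlinearity on ℓ²(ℤ). -/
theorem spin_nonlinearity_dissipative (k : ℕ)
    (y y' f0y f0y' : lp (fun _ : ℤ => ℝ) 2)
    (hf : ∀ n : ℤ, f0y n = (y (n + 1) - y n) ^ (2 * k + 1) + (y (n - 1) - y n) ^ (2 * k + 1))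
    (hf' : ∀ n : ℤ, f0y' n = (y' (n + 1) - y' n) ^ (2 * k + 1) + (y' (n - 1) - y' n) ^ (2 * k + 1)) :
    ⟪f0y - f0y', y - y'⟫ ≤ 0 := by
  classical
  set d : ℤ → ℝ := fun n => y (n + 1) - y n with hd
  set d' : ℤ → ℝ := fun n => y' (n + 1) - y' n with hd'
  set u : ℤ → ℝ := fun n => y n - y' n with huu
  set G : ℤ → ℝ := fun n => d n ^ (2 * k + 1) - d' n ^ (2 * k + 1) with hG
  have hodd : Odd (2 * k + 1) := ⟨k, by ring⟩
  -- pointwise rewriting of f0y - f0y'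
  have hF : ∀ n : ℤ, f0y n - f0y' n = G n - G (n - 1) := by
    intro n
    have e1 : y (n - 1) - y n = -(d (n - 1)) := by
      simp only [hd]; rw [sub_add_cancel]; ring
    have e1' : y' (n - 1) - y' n = -(d' (n - 1)) := by
      simp only [hd']; rw [sub_add_cancel]; ring
    rw [hf n, hf' n, e1, e1', hodd.neg_pow, hodd.neg_pow]
    simp only [hG, hd, hd']
    ring
  -- summability facts
  have hu2 : Summable (fun n => u n ^ 2) := by
    have := sq_summable_of_lp (y - y')
    simpa [huu, lp.coeFn_sub, Pi.sub_apply] using this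
  have hd2 : Summable (fun n => d n ^ 2) := diff_sq_summable y
  have hd'2 : Summable (fun n => d' n ^ 2) := diff_sq_summable y'
  -- powers of d are square-summable
  have pow_sq_summable : ∀ (v : ℤ → ℝ), Summable (fun n => v n ^ 2) →
      Summable (fun n => (v n ^ (2 * k + 1)) ^ 2) := by
    intro v hv
    set B : ℝ := ∑' n, v n ^ 2 with hB
    have hBle : ∀ n, v n ^ 2 ≤ B := fun n => Summable.le_tsum hv n (fun _ _ => sq_nonneg _)
    have hB0 : 0 ≤ B := le_trans (sq_nonneg (v 0)) (hBle 0)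
    refine Summable.of_nonneg_of_le (fun n => sq_nonneg _) (fun n => ?_)
      (hv.mul_left (B ^ (2 * k)))
    have : (v n ^ (2 * k + 1)) ^ 2 = (v n ^ 2) ^ (2 * k) * v n ^ 2 := by ring
    rw [this]
    exact mul_le_mul_of_nonneg_right (pow_le_pow_left₀ (sq_nonneg _) (hBle n) _) (sq_nonneg _)
  have hG2 : Summable (fun n => G n ^ 2) := by
    have h1 := pow_sq_summable d hd2
    have h2 := pow_sq_summable d' hd'2
    refine Summable.of_nonneg_of_le (fun n => sq_nonneg _) (fun n => ?_)
      ((h1.add h2).mul_left 2)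
    simp only [hG]
    nlinarith [sq_nonneg (d n ^ (2*k+1) + d' n ^ (2*k+1))]
  have prod_summable : ∀ (a b : ℤ → ℝ), Summable (fun n => a n ^ 2) →
      Summable (fun n => b n ^ 2) → Summable (fun n => a n * b n) := by
    intro a b ha hb
    refine Summable.of_abs (Summable.of_nonneg_of_le (fun n => abs_nonneg _) (fun n => ?_)
      (((ha.add hb).mul_left (1/2 : ℝ))))
    rw [abs_mul]
    nlinarith [sq_nonneg (|a n| - |b n|), sq_abs (a n), sq_abs (b n), abs_nonneg (a n), abs_nonneg (b n)]
  have hGu : Summable (fun n => G n * u n) := prod_summable G u hG2 hu2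
  have hu2' : Summable (fun n => u (n + 1) ^ 2) :=
    ((Equiv.addRight (1 : ℤ)).summable_iff (f := fun n : ℤ => u n ^ 2)).2 hu2
  have hGu' : Summable (fun n => G n * u (n + 1)) := prod_summable G (fun n => u (n+1)) hG2 hu2'
  -- the shifted sum
  have hshift : Summable (fun n => G (n - 1) * u n) := by
    refine ((Equiv.addRight (1 : ℤ)).summable_iff
      (f := fun n : ℤ => G (n - 1) * u n)).1 (hGu'.congr fun n => ?_)
    simp [Equiv.coe_addRight, add_sub_cancel_right]
  have hts : ∑' n, G (n - 1) * u n = ∑' n, G n * u (n + 1) := by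
    rw [← (Equiv.addRight (1 : ℤ)).tsum_eq (fun n : ℤ => G (n - 1) * u n)]
    exact tsum_congr fun n => by simp [Equiv.coe_addRight, add_sub_cancel_right]
  -- each term of the final sum is nonnegative
  have hterm : ∀ n, 0 ≤ G n * (d n - d' n) := by
    intro n
    rcases le_total (d n) (d' n) with h | h
    · have h1 : d n ^ (2 * k + 1) ≤ d' n ^ (2 * k + 1) :=
        (hodd.strictMono_pow (R := ℝ)).monotone h
      have := mul_nonneg (a := -(G n)) (b := -(d n - d' n))
        (by simp only [hG]; linarith) (by linarith)
      nlinarith [this]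
    · have h1 : d' n ^ (2 * k + 1) ≤ d n ^ (2 * k + 1) :=
        (hodd.strictMono_pow (R := ℝ)).monotone h
      exact mul_nonneg (by simp only [hG]; linarith) (by linarith)
  -- put it all together
  have hdiff : ∀ n : ℤ, u (n + 1) - u n = d n - d' n := by
    intro n; simp only [huu, hd, hd']; ring
  calc ⟪f0y - f0y', y - y'⟫ = ∑' n, ((f0y - f0y') n) * ((y - y') n) := by
        rw [lp.inner_eq_tsum]
        exact tsum_congr fun n => by simp [RCLike.inner_apply]; ring
    _ = ∑' n, (G n * u n - G (n - 1) * u n) := by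
        refine tsum_congr fun n => ?_
        have h1 : (f0y - f0y') n = f0y n - f0y' n := by simp [lp.coeFn_sub]
        have h2 : (y - y') n = u n := by simp [huu, lp.coeFn_sub]
        rw [h1, h2, hF n]; ring
    _ = ∑' n, G n * u n - ∑' n, G (n - 1) * u n := Summable.tsum_sub hGu hshift
    _ = ∑' n, G n * u n - ∑' n, G n * u (n + 1) := by rw [hts]
    _ = ∑' n, (G n * u n - G n * u (n + 1)) := (Summable.tsum_sub hGu hGu').symm
    _ = ∑' n, -(G n * (d n - d' n)) := by
        refine tsum_congr fun n => ?_
        rw [← hdiff n]; ring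
    _ = -∑' n, G n * (d n - d' n) := by rw [tsum_neg]
    _ ≤ 0 := neg_nonpos.2 (tsum_nonneg hterm)
end
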